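/- Let Q be a group, let P₁, P₂ be subgroups of Q which are both antinormal in Q and satisfy q P₁ q⁻¹ ∩ P₂ = {1} for every q ∈ Q, let φ : P₁ ≃ P₂ be an isomorphism, and let G = HNN(Q, P₁, P₂, φ) with canonical embedding of : Q → G. Then for every A ∈ G which is not conjugate in G to an element of of(Q), the maximal subgroup F(A) of of(Q) normalized by A is trivial. -/

import Mathlib

/-- `A` normalizes the subgroup `H`, i.e. `A H A⁻¹ = H`. -/
def Normalizes {G : Type*} [Group G] (A : G) (H : Subgroup G) : Prop :=
  ∀ x : G, x ∈ H ↔ A * x * A⁻¹ ∈ H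

/-- The maximal subgroup of `Q` normalized by `A`: the join of all subgroups of `Q`
normalized by `A`. -/
def maxNormalized {G : Type*} [Group G] (Q : Subgroup G) (A : G) : Subgroup G :=
  sSup {H : Subgroup G | H ≤ Q ∧ Normalizes A H}

/-- A subgroup `H` of `K` is antinormal if `gHg⁻¹ ∩ H ≠ {1}` implies `g ∈ H`. -/
def Antinormal {K : Type*} [Group K] (H : Subgroup K) : Prop :=
  ∀ g : K, H.map (MulAut.conj g).toMonoidHom ⊓ H ≠ ⊥ → g ∈ H

open Subgroup Function HNNExtension HNNExtension.NormalWord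
section Aux

open Subgroup Function HNNExtension

variable {Q : Type*} [Group Q] {P₁ P₂ : Subgroup Q}

lemma hint_contra (hint : ∀ g : Q, P₁.map (MulAut.conj g).toMonoidHom ⊓ P₂ = ⊥)
    (c x : Q) (hx1 : x ≠ 1) (hx2 : x ∈ P₂) (hx3 : c⁻¹ * x * c ∈ P₁) : False := by
  have hx : x ∈ P₁.map (MulAut.conj c).toMonoidHom ⊓ P₂ := by
    refine ⟨⟨c⁻¹ * x * c, hx3, ?_⟩, hx2⟩
    simp only [MulEquiv.coe_toMonoidHom, MulAut.conj_apply]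
    group
  rw [hint c] at hx
  exact hx1 hx

lemma anti_contra {P : Subgroup Q} (hP : Antinormal P)
    (c x : Q) (hx1 : x ≠ 1) (hx2 : x ∈ P) (hx3 : c⁻¹ * x * c ∈ P) : c ∈ P := by
  apply hP c
  intro hbot
  apply hx1
  have hx : x ∈ P.map (MulAut.conj c).toMonoidHom ⊓ P := by
    refine ⟨⟨c⁻¹ * x * c, hx3, ?_⟩, hx2⟩
    simp only [MulEquiv.coe_toMonoidHom, MulAut.conj_apply]
    group
  rw [hbot] at hx
  exact hx

variable {Q : Type*} [Group Q]

/-- multiply the last letter of the list on the right by `q` -/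
def appQ (q : Q) : List (ℤˣ × Q) → List (ℤˣ × Q)
  | [] => []
  | [x] => [(x.1, x.2 * q)]
  | x :: y :: l => x :: appQ q (y :: l)

@[simp] lemma appQ_nil (q : Q) : appQ q [] = [] := rfl
@[simp] lemma appQ_single (q : Q) (x : ℤˣ × Q) : appQ q [x] = [(x.1, x.2 * q)] := rfl
@[simp] lemma appQ_cons₂ (q : Q) (x y : ℤˣ × Q) (l : List (ℤˣ × Q)) :
    appQ q (x :: y :: l) = x :: appQ q (y :: l) := rfl

variable {P₁ P₂ : Subgroup Q}

lemma appQ_chain (q : Q) : ∀ (L : List (ℤˣ × Q)),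
    L.IsChain (fun a b => a.2 ∈ toSubgroup P₁ P₂ a.1 → a.1 = b.1) →
    (appQ q L).IsChain (fun a b => a.2 ∈ toSubgroup P₁ P₂ a.1 → a.1 = b.1)
  | [], _ => by simp
  | [x], _ => by simp
  | x :: y :: l, h => by
    rw [appQ_cons₂, List.isChain_cons]
    refine ⟨?_, appQ_chain q (y :: l) (List.isChain_cons_cons.1 h).2⟩
    intro z hz hx
    have h1 := (List.isChain_cons_cons.1 h).1 hx
    cases l with
    | nil => simp at hz; subst hz; exact h1
    | cons w m =>
      rw [appQ_cons₂] at hz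
      simp at hz; subst hz; exact h1

variable (φ : P₁ ≃* P₂)

noncomputable def prodList (L : List (ℤˣ × Q)) : HNNExtension Q P₁ P₂ φ :=
  (L.map (fun x : ℤˣ × Q => t ^ (x.1 : ℤ) * HNNExtension.of x.2)).prod

lemma prodList_appQ (q : Q) : ∀ (x : ℤˣ × Q) (l : List (ℤˣ × Q)),
    prodList φ (appQ q (x :: l)) = prodList φ (x :: l) * HNNExtension.of q
  | x, [] => by simp [prodList, mul_assoc, map_mul]
  | x, y :: m => by
    rw [appQ_cons₂]
    simp only [prodList, List.map_cons, List.prod_cons] at *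
    rw [show ((appQ q (y :: m)).map fun x : ℤˣ × Q =>
          (t : HNNExtension Q P₁ P₂ φ) ^ (x.1 : ℤ) * HNNExtension.of x.2).prod
        = prodList φ (appQ q (y :: m)) from rfl, prodList_appQ q y m]
    simp [prodList, mul_assoc]

lemma prod_eq (h : Q) (L : List (ℤˣ × Q)) (ch) :
    (⟨h, L, ch⟩ : HNNExtension.NormalWord.ReducedWord Q P₁ P₂).prod φ = HNNExtension.of h * prodList φ L := rfl

open HNNExtension.NormalWord

lemma head_rel (q q' h : Q) (u : ℤˣ) (g : Q) (L : List (ℤˣ × Q)) (ch)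
    (heq : HNNExtension.of q' * (⟨h, (u, g) :: L, ch⟩ : ReducedWord Q P₁ P₂).prod φ
      = (⟨h, (u, g) :: L, ch⟩ : ReducedWord Q P₁ P₂).prod φ * HNNExtension.of q) :
    h⁻¹ * q' * h ∈ toSubgroup P₁ P₂ (-u) := by
  have hprod : (⟨q' * h, (u, g) :: L, ch⟩ : ReducedWord Q P₁ P₂).prod φ
      = (⟨h, appQ q ((u, g) :: L), appQ_chain q _ ch⟩ : ReducedWord Q P₁ P₂).prod φ := by
    rw [prod_eq, prod_eq, map_mul, mul_assoc, ← prod_eq φ h _ ch, heq, prod_eq,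
      prodList_appQ, mul_assoc]
  have := (HNNExtension.ReducedWord.map_fst_eq_and_of_prod_eq φ hprod).2 u (by simp)
  simp only at this
  have h2 : h⁻¹ * q'⁻¹ * h ∈ toSubgroup P₁ P₂ (-u) := by
    convert this using 1; group
  have := inv_mem h2
  convert this using 1; group

lemma aux_move (u : ℤˣ) (p : Q) (hp : p ∈ toSubgroup P₁ P₂ (-u)) :
    ∃ p' : Q, p' ∈ toSubgroup P₁ P₂ u ∧ (p' = 1 ↔ p = 1) ∧
      (of p : HNNExtension Q P₁ P₂ φ) * t ^ (u : ℤ) = t ^ (u : ℤ) * of p' := by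
  rcases Int.units_eq_one_or u with rfl | rfl
  · refine ⟨φ.symm ⟨p, hp⟩, (φ.symm ⟨p, hp⟩).2, ?_, ?_⟩
    · rw [← Subgroup.coe_one P₁, SetLike.coe_eq_coe, EmbeddingLike.map_eq_one_iff]
      exact ⟨fun h => by simpa using congrArg Subtype.val h, fun h => by ext; simp [h]⟩
    · simpa using of_mul_t (φ := φ) ⟨p, hp⟩
  · rw [neg_neg] at hp
    refine ⟨φ ⟨p, hp⟩, (φ ⟨p, hp⟩).2, ?_, ?_⟩
    · rw [← Subgroup.coe_one P₂, SetLike.coe_eq_coe, EmbeddingLike.map_eq_one_iff]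
      exact ⟨fun h => by simpa using congrArg Subtype.val h, fun h => by ext; simp [h]⟩
    · simpa using of_mul_inv_t (φ := φ) ⟨p, hp⟩

lemma core (hanti₁ : Antinormal P₁) (hanti₂ : Antinormal P₂)
    (hint : ∀ g : Q, P₁.map (MulAut.conj g).toMonoidHom ⊓ P₂ = ⊥)
    (q : Q) (hq : q ≠ 1) :
    ∀ (L : List (ℤˣ × Q)) (ch : L.IsChain fun a b => a.2 ∈ toSubgroup P₁ P₂ a.1 → a.1 = b.1)
      (h q' : Q), q' ≠ 1 →
      HNNExtension.of q' * (⟨h, L, ch⟩ : ReducedWord Q P₁ P₂).prod φ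
        = (⟨h, L, ch⟩ : ReducedWord Q P₁ P₂).prod φ * HNNExtension.of q →
      (L = [] ∧ q' = h * q * h⁻¹) ∨
        ∃ u g, L = [(u, g)] ∧ h⁻¹ * q' * h ∈ toSubgroup P₁ P₂ (-u) ∧
          g * q * g⁻¹ ∈ toSubgroup P₁ P₂ u
  | [], ch, h, q', hq', heq => by
    left
    refine ⟨rfl, ?_⟩
    rw [prod_eq] at heq
    simp only [prodList, List.map_nil, List.prod_nil, mul_one] at heq
    rw [← map_mul, ← map_mul] at heq
    have h2 := HNNExtension.of_injective φ heq
    rw [eq_mul_inv_iff_mul_eq]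
    exact h2
  | (u₁, g₁) :: rest, ch, h, q', hq', heq => by
    have hrel : h⁻¹ * q' * h ∈ toSubgroup P₁ P₂ (-u₁) := head_rel φ q q' h u₁ g₁ rest ch heq
    have hpne : h⁻¹ * q' * h ≠ 1 := by
      intro hh
      apply hq'
      have h2 : q' = h * (h⁻¹ * q' * h) * h⁻¹ := by group
      rw [h2, hh]; group
    obtain ⟨p', hp'mem, hp'iff, hmove⟩ := aux_move φ u₁ _ hrel
    have hp'ne : p' ≠ 1 := fun h1 => hpne (hp'iff.1 h1)
    have key : HNNExtension.of p' * (HNNExtension.of g₁ * prodList φ rest)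
        = (HNNExtension.of g₁ * prodList φ rest) * HNNExtension.of q := by
      rw [prod_eq] at heq
      have e0 : prodList φ ((u₁, g₁) :: rest)
          = t ^ (u₁ : ℤ) * (HNNExtension.of g₁ * prodList φ rest) := by
        simp [prodList, mul_assoc]
      rw [e0] at heq
      have e2 : (HNNExtension.of q' : HNNExtension Q P₁ P₂ φ) * HNNExtension.of h
          = HNNExtension.of h * HNNExtension.of (h⁻¹ * q' * h) := by
        rw [← map_mul, ← map_mul]; congr 1; group
      have hP' : (HNNExtension.of p' : HNNExtension Q P₁ P₂ φ)
          = (t ^ (u₁ : ℤ))⁻¹ * (HNNExtension.of (h⁻¹ * q' * h) * t ^ (u₁ : ℤ)) := by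
        rw [hmove]; group
      have hPp : (HNNExtension.of (h⁻¹ * q' * h) : HNNExtension Q P₁ P₂ φ)
          = (HNNExtension.of h)⁻¹ * (HNNExtension.of q' * HNNExtension.of h) := by
        rw [e2]; group
      calc HNNExtension.of p' * (HNNExtension.of g₁ * prodList φ rest)
          = (t ^ (u₁ : ℤ))⁻¹ * ((HNNExtension.of h)⁻¹ *
            (HNNExtension.of q' * (HNNExtension.of h *
              (t ^ (u₁ : ℤ) * (HNNExtension.of g₁ * prodList φ rest))))) := by
            rw [hP', hPp]; group
        _ = (t ^ (u₁ : ℤ))⁻¹ * ((HNNExtension.of h)⁻¹ *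
            (HNNExtension.of h * (t ^ (u₁ : ℤ) * (HNNExtension.of g₁ * prodList φ rest)) *
              HNNExtension.of q)) := by rw [heq]
        _ = (HNNExtension.of g₁ * prodList φ rest) * HNNExtension.of q := by group
    have ch' : rest.IsChain fun a b => a.2 ∈ toSubgroup P₁ P₂ a.1 → a.1 = b.1 :=
      (List.isChain_cons.1 ch).2
    have key' : HNNExtension.of p' * (⟨g₁, rest, ch'⟩ : ReducedWord Q P₁ P₂).prod φ
        = (⟨g₁, rest, ch'⟩ : ReducedWord Q P₁ P₂).prod φ * HNNExtension.of q := by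
      rw [prod_eq]; exact key
    rcases core hanti₁ hanti₂ hint q hq rest ch' g₁ p' hp'ne key' with
      ⟨rfl, hp'eq⟩ | ⟨u₂, g₂, rfl, hrel2, hrel3⟩
    · right
      exact ⟨u₁, g₁, rfl, hrel, hp'eq ▸ hp'mem⟩
    · exfalso
      have hch : g₁ ∈ toSubgroup P₁ P₂ u₁ → u₁ = u₂ := (List.isChain_cons_cons.1 ch).1
      have hxne : g₁⁻¹ * p' * g₁ ≠ 1 := by
        intro hh
        apply hp'ne
        have h2 : p' = g₁ * (g₁⁻¹ * p' * g₁) * g₁⁻¹ := by group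
        rw [h2, hh]; group
      rcases Int.units_eq_one_or u₁ with rfl | rfl <;>
        rcases Int.units_eq_one_or u₂ with rfl | rfl
      · -- u₁ = 1, u₂ = 1 : p' ∈ P₁, g₁⁻¹ p' g₁ ∈ P₂
        refine hint_contra hint g₁⁻¹ (g₁⁻¹ * p' * g₁) hxne hrel2 ?_
        have h2 : (g₁⁻¹)⁻¹ * (g₁⁻¹ * p' * g₁) * g₁⁻¹ = p' := by group
        rw [h2]; exact hp'mem
      · -- u₁ = 1, u₂ = -1 : p' ∈ P₁, g₁⁻¹ p' g₁ ∈ P₁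
        have hrel2' : g₁⁻¹ * p' * g₁ ∈ P₁ := by rwa [neg_neg] at hrel2
        have := anti_contra hanti₁ g₁ p' hp'ne hp'mem hrel2'
        exact absurd (hch this) (by decide)
      · -- u₁ = -1, u₂ = 1 : p' ∈ P₂, g₁⁻¹ p' g₁ ∈ P₂
        have := anti_contra hanti₂ g₁ p' hp'ne hp'mem hrel2
        exact absurd (hch this) (by decide)
      · -- u₁ = -1, u₂ = -1 : p' ∈ P₂, g₁⁻¹ p' g₁ ∈ P₁
        have hrel2' : g₁⁻¹ * p' * g₁ ∈ P₁ := by rwa [neg_neg] at hrel2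
        exact hint_contra hint g₁ p' hp'ne hp'mem hrel2'

end Aux

/-- under Mikhajlovskii's hypotheses, `F(A)` is trivial for every `A` not
conjugate to an element of the base group. -/
theorem maxNormalized_trivial_of_antinormal
    {Q : Type*} [Group Q] (P₁ P₂ : Subgroup Q)
    (hanti₁ : Antinormal P₁) (hanti₂ : Antinormal P₂)
    (hint : ∀ q : Q, P₁.map (MulAut.conj q).toMonoidHom ⊓ P₂ = ⊥)
    (φ : P₁ ≃* P₂)
    (A : HNNExtension Q P₁ P₂ φ)
    (hA : ¬ ∃ q ∈ (HNNExtension.of : Q →* HNNExtension Q P₁ P₂ φ).range, IsConj A q) :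
    maxNormalized (HNNExtension.of : Q →* HNNExtension Q P₁ P₂ φ).range A = ⊥ := by
  rw [maxNormalized, sSup_eq_bot]
  rintro H ⟨hle, hnorm⟩
  by_contra hne
  obtain ⟨⟨x, hxH⟩, hx1⟩ := Subgroup.ne_bot_iff_exists_ne_one.1 hne
  have hx1' : x ≠ 1 := by simpa [Subtype.ext_iff] using hx1
  obtain ⟨q, hq⟩ := hle hxH
  have hqne : q ≠ 1 := fun hh => hx1' (by rw [← hq, hh, map_one])
  have hxq : HNNExtension.of q ∈ H := hq ▸ hxH
  -- plus direction
  have hplus : A * HNNExtension.of q * A⁻¹ ∈ H := (hnorm _).1 hxq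
  obtain ⟨qp, hqp⟩ := hle hplus
  have hqpne : qp ≠ 1 := by
    intro hh
    rw [hh, map_one] at hqp
    apply hqne
    apply HNNExtension.of_injective φ
    rw [map_one]
    have h2 : HNNExtension.of q = A⁻¹ * (A * HNNExtension.of q * A⁻¹) * A := by group
    rw [h2, ← hqp]; group
  -- minus direction
  have hminus : A⁻¹ * HNNExtension.of q * A ∈ H := by
    apply (hnorm _).2
    have h2 : A * (A⁻¹ * HNNExtension.of q * A) * A⁻¹ = HNNExtension.of q := by group
    rw [h2]; exact hxq
  obtain ⟨qm, hqm⟩ := hle hminus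
  have hqmne : qm ≠ 1 := by
    intro hh
    rw [hh, map_one] at hqm
    apply hqne
    apply HNNExtension.of_injective φ
    rw [map_one]
    have h2 : HNNExtension.of q = A * (A⁻¹ * HNNExtension.of q * A) * A⁻¹ := by group
    rw [h2, ← hqm]; group
  -- normal word for A
  obtain ⟨d⟩ := HNNExtension.NormalWord.TransversalPair.nonempty Q P₁ P₂
  set w := HNNExtension.NormalWord.equiv φ d A with hw
  have hAw : (⟨w.head, w.toList, w.chain⟩ : ReducedWord Q P₁ P₂).prod φ = A :=
    (HNNExtension.NormalWord.equiv φ d).symm_apply_apply A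
  have e1 : HNNExtension.of qp * (⟨w.head, w.toList, w.chain⟩ : ReducedWord Q P₁ P₂).prod φ
      = (⟨w.head, w.toList, w.chain⟩ : ReducedWord Q P₁ P₂).prod φ * HNNExtension.of q := by
    rw [hAw, hqp]; group
  rcases core φ hanti₁ hanti₂ hint q hqne w.toList w.chain w.head qp hqpne e1 with
    ⟨hnil, _⟩ | ⟨u, g, hL, hr1, hr2⟩
  · apply hA
    refine ⟨A, ⟨w.head, ?_⟩, IsConj.refl A⟩
    rw [← hAw, prod_eq, hnil]
    simp [prodList]
  · have e2 : HNNExtension.of q * (⟨w.head, w.toList, w.chain⟩ : ReducedWord Q P₁ P₂).prod φ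
        = (⟨w.head, w.toList, w.chain⟩ : ReducedWord Q P₁ P₂).prod φ * HNNExtension.of qm := by
      rw [hAw, hqm]; group
    rcases core φ hanti₁ hanti₂ hint qm hqmne w.toList w.chain w.head q hqne e2 with
      ⟨hnil, _⟩ | ⟨u', g', hL', hr1', hr2'⟩
    · rw [hL] at hnil; simp at hnil
    · rw [hL] at hL'
      obtain ⟨h1, h2⟩ : u = u' ∧ g = g' := by simpa using hL'
      subst h1; subst h2
      have hzne : w.head⁻¹ * q * w.head ≠ 1 := by
        intro hh
        apply hqne
        have h2 : q = w.head * (w.head⁻¹ * q * w.head) * w.head⁻¹ := by group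
        rw [h2, hh]; group
      have hyne : g * q * g⁻¹ ≠ 1 := by
        intro hh
        apply hqne
        have h2 : q = g⁻¹ * (g * q * g⁻¹) * g := by group
        rw [h2, hh]; group
      rcases Int.units_eq_one_or u with rfl | rfl
      · -- g q g⁻¹ ∈ P₁, head⁻¹ q head ∈ P₂
        refine hint_contra hint (g * w.head)⁻¹ (w.head⁻¹ * q * w.head) hzne hr1' ?_
        have h2 : ((g * w.head)⁻¹)⁻¹ * (w.head⁻¹ * q * w.head) * (g * w.head)⁻¹
            = g * q * g⁻¹ := by group
        rw [h2]; exact hr2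
      · -- g q g⁻¹ ∈ P₂, head⁻¹ q head ∈ P₁
        rw [neg_neg] at hr1'
        refine hint_contra hint (g * w.head) (g * q * g⁻¹) hyne hr2 ?_
        have h2 : (g * w.head)⁻¹ * (g * q * g⁻¹) * (g * w.head)
            = w.head⁻¹ * q * w.head := by group
        rw [h2]; exact hr1'
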